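/- For every oligopoly pricing game there exists an efficient equilibrium. Concretely, let (r_i^*)_{i=1}^N be the socially optimal routing and λ* := min_{j} λ_j(r_j^*); then the pricing profile B_i(t) = λ*·t for every relay i, together with the routing (r_i^*), is an equilibrium, so the socially optimal routing is induced by an equilibrium. -/

import Mathlib

open Finset MeasureTheory intervalIntegral Set

/-- Virtual-competitor cost function: the minimal total cost of splitting traffic `t`
among the relays other than `i`, given pricing functions `B`. -/
noncomputable def Bhat (N : ℕ) (B : Fin N → ℝ → ℝ) (i : Fin N) (t : ℝ) : ℝ :=
  sInf {c : ℝ | ∃ g : Fin N → ℝ, (∀ j, 0 ≤ g j) ∧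
    (∑ j ∈ Finset.univ.erase i, g j) = t ∧ c = ∑ j ∈ Finset.univ.erase i, B j (g j)}

/-- A routing of total rate `Rs` among `N` relays. -/
def IsRouting (N : ℕ) (Rs : ℝ) (f : Fin N → ℝ) : Prop :=
  (∀ i, 0 ≤ f i) ∧ (∑ i, f i) = Rs

/-- The network cost of a routing. -/
noncomputable def totalCost (N : ℕ) (lam : Fin N → ℝ → ℝ) (f : Fin N → ℝ) : ℝ :=
  ∑ i, ∫ r in (0:ℝ)..(f i), lam i r

/-- The socially optimal routing: a routing of minimum cost. -/
def IsSociallyOptimal (N : ℕ) (Rs : ℝ) (lam : Fin N → ℝ → ℝ) (f : Fin N → ℝ) : Prop :=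
  IsRouting N Rs f ∧ ∀ g, IsRouting N Rs g → totalCost N lam f ≤ totalCost N lam g

/-- An oligopoly pricing game: at least two relays, positive rate, and marginal cost
functions that are positive, continuous and strictly increasing on `[0, Rs]`. -/
def IsOligopoly (N : ℕ) (Rs : ℝ) (lam : Fin N → ℝ → ℝ) : Prop :=
  2 ≤ N ∧ 0 < Rs ∧ ∀ i,
    (∀ t ∈ Set.Icc (0:ℝ) Rs, 0 < lam i t) ∧
    ContinuousOn (lam i) (Set.Icc 0 Rs) ∧
    StrictMonoOn (lam i) (Set.Icc 0 Rs)

/-- A pricing profile: each relay's pricing function is continuous, nondecreasing,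
and vanishes at `0`. -/
def IsPricingProfile (N : ℕ) (Rs : ℝ) (B : Fin N → ℝ → ℝ) : Prop :=
  ∀ i, ContinuousOn (B i) (Set.Icc 0 Rs) ∧ MonotoneOn (B i) (Set.Icc 0 Rs) ∧ B i 0 = 0

/-- Equilibrium of the oligopoly pricing game. -/
def IsEquilibrium (N : ℕ) (Rs : ℝ) (lam B : Fin N → ℝ → ℝ) (f : Fin N → ℝ) : Prop :=
  IsPricingProfile N Rs B ∧ IsRouting N Rs f ∧
  (∀ g, IsRouting N Rs g → (∑ i, B i (f i)) ≤ ∑ i, B i (g i)) ∧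
  (∀ i, ∀ t ∈ Set.Icc (0:ℝ) Rs, Bhat N B i Rs - Bhat N B i (Rs - t) ≤ B i t) ∧
  (∀ i, B i (f i) = Bhat N B i Rs - Bhat N B i (Rs - f i)) ∧
  (∀ i, ∀ t ∈ Set.Icc (0:ℝ) Rs,
    Bhat N B i Rs - Bhat N B i (Rs - t) - (∫ r in (0:ℝ)..t, lam i r) ≤
    Bhat N B i Rs - Bhat N B i (Rs - f i) - ∫ r in (0:ℝ)..(f i), lam i r)

/-- A function having one-sided derivatives: a right derivative at every point of
`[0, Rs)` and a left derivative at every point of `(0, Rs]`. -/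
def HasOneSidedDerivs (Rs : ℝ) (F : ℝ → ℝ) : Prop :=
  (∀ t ∈ Set.Ico (0:ℝ) Rs, ∃ d, HasDerivWithinAt F d (Set.Ici t) t) ∧
  (∀ t ∈ Set.Ioc (0:ℝ) Rs, ∃ d, HasDerivWithinAt F d (Set.Iic t) t)

/-- The socially optimal routing of an oligopoly can always be induced by an
equilibrium: with `ropt` the socially optimal routing and `lamstar = min_j λ_j(ropt j)`,
the pricing profile `B i t = lamstar * t` together with `ropt` is an equilibrium. -/
lemma Bhat_linear (N : ℕ) (hN : 2 ≤ N) (c : ℝ) (i : Fin N) (s : ℝ) (hs : 0 ≤ s) :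
    Bhat N (fun _ t => c * t) i s = c * s := by
  have hne : (Finset.univ.erase i).Nonempty := by
    rw [← Finset.card_pos, Finset.card_erase_of_mem (Finset.mem_univ i), Finset.card_univ,
      Fintype.card_fin]
    omega
  obtain ⟨j0, hj0⟩ := hne
  have hset : {x : ℝ | ∃ g : Fin N → ℝ, (∀ j, 0 ≤ g j) ∧
      (∑ j ∈ Finset.univ.erase i, g j) = s ∧
      x = ∑ j ∈ Finset.univ.erase i, (fun (_ : Fin N) (t : ℝ) => c * t) j (g j)} = {c * s} := by
    ext x
    simp only [Set.mem_setOf_eq, Set.mem_singleton_iff]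
    constructor
    · rintro ⟨g, hg0, hgsum, rfl⟩
      simp only [← Finset.mul_sum, hgsum]
    · rintro rfl
      refine ⟨fun k => if k = j0 then s else 0, fun j => by dsimp only; split <;> simp [hs], ?_, ?_⟩
      · rw [Finset.sum_ite_eq' _ j0 (fun _ => s), if_pos hj0]
      · simp only [← Finset.mul_sum]
        rw [Finset.sum_ite_eq' _ j0 (fun _ => s), if_pos hj0]
  rw [Bhat, hset, csInf_singleton]

lemma routing_pair_le (N : ℕ) (Rs : ℝ) (f : Fin N → ℝ) (hf : IsRouting N Rs f)
    (i j : Fin N) (hij : i ≠ j) : f i + f j ≤ Rs := by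
  have h := Finset.sum_le_sum_of_subset_of_nonneg (Finset.subset_univ {i, j})
    (fun k _ _ => hf.1 k)
  rwa [Finset.sum_pair hij, hf.2] at h

lemma routing_le (N : ℕ) (Rs : ℝ) (f : Fin N → ℝ) (hf : IsRouting N Rs f) (i : Fin N) :
    f i ≤ Rs := by
  have h := Finset.sum_le_sum_of_subset_of_nonneg (Finset.subset_univ {i})
    (fun k _ _ => hf.1 k)
  rwa [Finset.sum_singleton, hf.2] at h

lemma lam_intervalIntegrable (N : ℕ) (Rs : ℝ) (lam : Fin N → ℝ → ℝ)
    (holig : IsOligopoly N Rs lam) (i : Fin N) {a b : ℝ}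
    (ha : a ∈ Set.Icc (0:ℝ) Rs) (hb : b ∈ Set.Icc (0:ℝ) Rs) :
    IntervalIntegrable (lam i) volume a b := by
  apply ContinuousOn.intervalIntegrable
  apply (holig.2.2 i).2.1.mono
  rw [Set.uIcc]
  exact Set.Icc_subset_Icc (le_inf ha.1 hb.1) (sup_le ha.2 hb.2)

/-- Key optimality condition: at a socially optimal routing, any relay with positive
flow has marginal cost equal to the minimum marginal cost. -/
lemma opt_marginal_le (N : ℕ) (Rs : ℝ) (lam : Fin N → ℝ → ℝ) (ropt : Fin N → ℝ)
    (lamstar : ℝ) (holig : IsOligopoly N Rs lam) (hopt : IsSociallyOptimal N Rs lam ropt)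
    (hmin : IsLeast (Set.range fun j => lam j (ropt j)) lamstar) (i : Fin N)
    (hpos : 0 < ropt i) : lam i (ropt i) ≤ lamstar := by
  by_contra hcon
  push_neg at hcon
  obtain ⟨j, hj⟩ := hmin.1
  simp only at hj
  have hij : i ≠ j := by rintro rfl; exact absurd hj (by linarith)
  have hji : j ≠ i := hij.symm
  set ri := ropt i with hri
  set rj := ropt j with hrj
  have hrimem : ri ∈ Set.Icc (0:ℝ) Rs := ⟨hopt.1.1 i, routing_le N Rs ropt hopt.1 i⟩
  have hrjmem : rj ∈ Set.Icc (0:ℝ) Rs := ⟨hopt.1.1 j, routing_le N Rs ropt hopt.1 j⟩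
  have hpair : ri + rj ≤ Rs := routing_pair_le N Rs ropt hopt.1 i j hij
  set b := (lamstar + lam i ri) / 2 with hb
  have hb1 : lam j rj < b := by rw [hj]; simp only [hb]; linarith
  have hb2 : b < lam i ri := by simp only [hb]; linarith
  -- filter at 0 from the right
  set l := nhdsWithin (0:ℝ) (Set.Ioi 0) with hl
  have htend0 : Filter.Tendsto (fun ε : ℝ => ε) l (nhds 0) :=
    Filter.tendsto_id.mono_right nhdsWithin_le_nhds
  have hev0 : ∀ᶠ ε in l, (0:ℝ) < ε :=
    Filter.eventually_of_mem self_mem_nhdsWithin (fun x hx => hx)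
  have hevri : ∀ᶠ ε in l, ε < ri := htend0.eventually_lt_const hpos
  -- right continuity at rj
  have htendj : Filter.Tendsto (fun ε : ℝ => rj + ε) l (nhdsWithin rj (Set.Icc 0 Rs)) := by
    rw [tendsto_nhdsWithin_iff]
    constructor
    · simpa using (htend0.const_add rj)
    · filter_upwards [hev0, hevri] with ε h1 h2
      exact ⟨by linarith [hrjmem.1], by linarith⟩
  have hcj : Filter.Tendsto (fun ε : ℝ => lam j (rj + ε)) l (nhds (lam j rj)) :=
    Filter.Tendsto.comp ((holig.2.2 j).2.1.continuousWithinAt hrjmem) htendj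
  have hevj : ∀ᶠ ε in l, lam j (rj + ε) < b := hcj.eventually_lt_const hb1
  -- left continuity at ri
  have htendi : Filter.Tendsto (fun ε : ℝ => ri - ε) l (nhdsWithin ri (Set.Icc 0 Rs)) := by
    rw [tendsto_nhdsWithin_iff]
    constructor
    · simpa using (htend0.const_sub ri)
    · filter_upwards [hev0, hevri] with ε h1 h2
      exact ⟨by linarith, by linarith [hrimem.2]⟩
  have hci : Filter.Tendsto (fun ε : ℝ => lam i (ri - ε)) l (nhds (lam i ri)) :=
    Filter.Tendsto.comp ((holig.2.2 i).2.1.continuousWithinAt hrimem) htendi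
  have hevi : ∀ᶠ ε in l, b < lam i (ri - ε) := hci.eventually_const_lt hb2
  -- pick ε
  obtain ⟨ε, hε0, hεri, hεj, hεi⟩ := (hev0.and (hevri.and (hevj.and hevi))).exists
  -- the perturbed routing
  set g : Fin N → ℝ := fun k =>
    ropt k + (if k = i then -ε else 0) + (if k = j then ε else 0) with hgdef
  have hgi : g i = ri - ε := by simp [hgdef, hij]; ring
  have hgj : g j = rj + ε := by simp [hgdef, hji, hrj]
  have hgk : ∀ k, k ≠ i → k ≠ j → g k = ropt k := by
    intro k h1 h2; simp [hgdef, h1, h2]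
  have hgrouting : IsRouting N Rs g := by
    constructor
    · intro k
      by_cases h1 : k = i
      · subst h1; rw [hgi]; linarith
      · by_cases h2 : k = j
        · subst h2; rw [hgj]; linarith [hrjmem.1]
        · rw [hgk k h1 h2]; exact hopt.1.1 k
    · have hsplit : ∑ k, g k = ∑ k, ropt k + ∑ k, (if k = i then -ε else 0)
          + ∑ k, (if k = j then ε else 0) := by
        rw [← Finset.sum_add_distrib, ← Finset.sum_add_distrib]
      rw [hsplit, Finset.sum_ite_eq' Finset.univ i (fun _ => -ε),
        Finset.sum_ite_eq' Finset.univ j (fun _ => ε)]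
      simp [hopt.1.2]
  -- membership of perturbed endpoints
  have hriε : ri - ε ∈ Set.Icc (0:ℝ) Rs := ⟨by linarith, by linarith [hrimem.2]⟩
  have hrjε : rj + ε ∈ Set.Icc (0:ℝ) Rs := ⟨by linarith [hrjmem.1], by linarith⟩
  have h0mem : (0:ℝ) ∈ Set.Icc (0:ℝ) Rs := ⟨le_refl 0, le_of_lt holig.2.1⟩
  set A := ∫ r in (ri - ε)..ri, lam i r with hA
  set B := ∫ r in rj..(rj + ε), lam j r with hB
  have hcosti : (∫ r in (0:ℝ)..(ri - ε), lam i r) = (∫ r in (0:ℝ)..ri, lam i r) - A := by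
    rw [eq_sub_iff_add_eq, hA,
      intervalIntegral.integral_add_adjacent_intervals
        (lam_intervalIntegrable N Rs lam holig i h0mem hriε)
        (lam_intervalIntegrable N Rs lam holig i hriε hrimem)]
  have hcostj : (∫ r in (0:ℝ)..(rj + ε), lam j r) = (∫ r in (0:ℝ)..rj, lam j r) + B := by
    rw [hB, intervalIntegral.integral_add_adjacent_intervals
      (lam_intervalIntegrable N Rs lam holig j h0mem hrjmem)
      (lam_intervalIntegrable N Rs lam holig j hrjmem hrjε)]
  have hdiff : totalCost N lam g = totalCost N lam ropt - A + B := by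
    unfold totalCost
    have hsplit : ∀ k : Fin N, (∫ r in (0:ℝ)..(g k), lam k r) =
        (∫ r in (0:ℝ)..(ropt k), lam k r) + (if k = i then -A else 0)
          + (if k = j then B else 0) := by
      intro k
      by_cases h1 : k = i
      · subst h1; rw [hgi, hcosti, if_pos rfl, if_neg hij]; ring
      · by_cases h2 : k = j
        · subst h2; rw [hgj, hcostj, if_neg h1, if_pos rfl]; ring
        · rw [hgk k h1 h2, if_neg h1, if_neg h2]; ring
    rw [Finset.sum_congr rfl (fun k _ => hsplit k), Finset.sum_add_distrib,
      Finset.sum_add_distrib, Finset.sum_ite_eq' Finset.univ i (fun _ => -A),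
      Finset.sum_ite_eq' Finset.univ j (fun _ => B)]
    simp; ring
  -- bounds on A and B
  have hmono_i := (holig.2.2 i).2.2.monotoneOn
  have hmono_j := (holig.2.2 j).2.2.monotoneOn
  have hAlow : ε * lam i (ri - ε) ≤ A := by
    have h := intervalIntegral.integral_mono_on (by linarith : ri - ε ≤ ri)
      (intervalIntegrable_const) (lam_intervalIntegrable N Rs lam holig i hriε hrimem)
      (fun r hr => hmono_i hriε ⟨by linarith [hr.1, hriε.1], by linarith [hr.2, hrimem.2]⟩ hr.1)
    rwa [intervalIntegral.integral_const, smul_eq_mul, sub_sub_cancel] at h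
  have hBhigh : B ≤ ε * lam j (rj + ε) := by
    have h := intervalIntegral.integral_mono_on (by linarith : rj ≤ rj + ε)
      (lam_intervalIntegrable N Rs lam holig j hrjmem hrjε) (intervalIntegrable_const)
      (fun r hr => hmono_j ⟨by linarith [hr.1, hrjmem.1], by linarith [hr.2, hrjε.2]⟩ hrjε hr.2)
    rwa [intervalIntegral.integral_const, smul_eq_mul, add_sub_cancel_left] at h
  have hAgt : ε * b < A := lt_of_lt_of_le (by nlinarith) hAlow
  have hBlt : B < ε * b := lt_of_le_of_lt hBhigh (by nlinarith)
  have : totalCost N lam g < totalCost N lam ropt := by rw [hdiff]; linarith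
  linarith [hopt.2 g hgrouting]

theorem efficient_equilibrium_exists
    (N : ℕ) (Rs : ℝ) (lam : Fin N → ℝ → ℝ) (ropt : Fin N → ℝ) (lamstar : ℝ)
    (holig : IsOligopoly N Rs lam)
    (hopt : IsSociallyOptimal N Rs lam ropt)
    (hmin : IsLeast (Set.range fun j => lam j (ropt j)) lamstar) :
    IsEquilibrium N Rs lam (fun _ t => lamstar * t) ropt := by
  have hN := holig.1
  have hRs := holig.2.1
  obtain ⟨j0, hj0⟩ := hmin.1
  simp only at hj0
  have hropt_mem : ∀ i, ropt i ∈ Set.Icc (0:ℝ) Rs :=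
    fun i => ⟨hopt.1.1 i, routing_le N Rs ropt hopt.1 i⟩
  have hlamstar_pos : 0 < lamstar := by
    rw [← hj0]; exact (holig.2.2 j0).1 _ (hropt_mem j0)
  have hBh : ∀ (i : Fin N) (s : ℝ), 0 ≤ s →
      Bhat N (fun _ t => lamstar * t) i s = lamstar * s :=
    fun i s hs => Bhat_linear N hN lamstar i s hs
  refine ⟨?_, hopt.1, ?_, ?_, ?_, ?_⟩
  · -- pricing profile
    intro i
    refine ⟨(continuous_const.mul continuous_id).continuousOn, ?_, mul_zero _⟩
    intro a _ b _ hab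
    exact mul_le_mul_of_nonneg_left hab hlamstar_pos.le
  · -- routing cost minimality
    intro g hg
    simp only [← Finset.mul_sum, hopt.1.2, hg.2, le_refl]
  · -- pricing lower bound
    intro i t ht
    rw [hBh i Rs hRs.le, hBh i (Rs - t) (by linarith [ht.2])]
    exact le_of_eq (by ring)
  · -- equality at routing
    intro i
    rw [hBh i Rs hRs.le, hBh i (Rs - ropt i) (by linarith [(hropt_mem i).2])]
    ring
  · -- profit maximization
    intro i t ht
    rw [hBh i Rs hRs.le, hBh i (Rs - t) (by linarith [ht.2]),
      hBh i (Rs - ropt i) (by linarith [(hropt_mem i).2])]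
    have h0mem : (0:ℝ) ∈ Set.Icc (0:ℝ) Rs := ⟨le_refl 0, hRs.le⟩
    have hsub : (∫ r in (0:ℝ)..t, lam i r) - (∫ r in (0:ℝ)..(ropt i), lam i r)
        = ∫ r in (ropt i)..t, lam i r :=
      intervalIntegral.integral_interval_sub_left
        (lam_intervalIntegrable N Rs lam holig i h0mem ht)
        (lam_intervalIntegrable N Rs lam holig i h0mem (hropt_mem i))
    have hlow : lamstar ≤ lam i (ropt i) := hmin.2 ⟨i, rfl⟩
    have hmono := (holig.2.2 i).2.2.monotoneOn
    have key : lamstar * (t - ropt i) ≤ ∫ r in (ropt i)..t, lam i r := by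
      rcases le_or_gt (ropt i) t with hle | hlt
      · have h := intervalIntegral.integral_mono_on hle (intervalIntegrable_const)
          (lam_intervalIntegrable N Rs lam holig i (hropt_mem i) ht)
          (fun r hr => le_trans hlow
            (hmono (hropt_mem i) ⟨le_trans (hropt_mem i).1 hr.1, le_trans hr.2 ht.2⟩ hr.1))
        rwa [intervalIntegral.integral_const, smul_eq_mul, mul_comm] at h
      · have hipos : 0 < ropt i := lt_of_le_of_lt ht.1 hlt
        have hup : lam i (ropt i) ≤ lamstar :=
          opt_marginal_le N Rs lam ropt lamstar holig hopt hmin i hipos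
        have h := intervalIntegral.integral_mono_on hlt.le
          (lam_intervalIntegrable N Rs lam holig i ht (hropt_mem i))
          (intervalIntegrable_const)
          (fun r hr => le_trans
            (hmono ⟨le_trans ht.1 hr.1, le_trans hr.2 (hropt_mem i).2⟩ (hropt_mem i) hr.2) hup)
        rw [intervalIntegral.integral_const, smul_eq_mul] at h
        rw [intervalIntegral.integral_symm]
        nlinarith
    have e1 : lamstar * (Rs - t) = lamstar * Rs - lamstar * t := by ring
    have e2 : lamstar * (Rs - ropt i) = lamstar * Rs - lamstar * ropt i := by ring
    have e3 : lamstar * (t - ropt i) = lamstar * t - lamstar * ropt i := by ring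
    linarith [key, hsub]
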